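/- (Fourier representation of twisted waves.) Let α ∈ ℤ, β ∈ ℝ, γ > 0 and n ∈ ℂ³, let E₀ be the twisted wave with parameters (α,β,γ) and polarization vector n, and set k₀ = (0, γ, β) ∈ ℝ³. Then for every x ∈ ℝ³ with x₁² + x₂² > 0: E₀(x) = (1/2π) ∫₀^{2π} e^{iαΦ} (R_Φ n) e^{i (R_Φ k₀) · x} dΦ, i.e. the twisted wave is a phase-modulated superposition of plane waves whose wavevectors run over the circle {R_Φ k₀ : Φ ∈ [0,2π]} and whose polarization vectors rotate along with the wavevector. -/

import Mathlib

noncomputable section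

open Real MeasureTheory

abbrev V3 : Type := Fin 3 → ℝ
abbrev C3 : Type := Fin 3 → ℂ

/-- Partial derivative of a scalar field in the `i`-th coordinate direction. -/
def pd (i : Fin 3) (f : V3 → ℂ) (x : V3) : ℂ := fderiv ℝ f x (Pi.single i 1)

/-- Componentwise Laplacian of a scalar field. -/
def lap (f : V3 → ℂ) (x : V3) : ℂ := ∑ i, pd i (pd i f) x

/-- Rotation by angle `θ` about the `e₃` axis. -/
def Rot (θ : ℝ) : Matrix (Fin 3) (Fin 3) ℝ :=
  !![Real.cos θ, -Real.sin θ, 0; Real.sin θ, Real.cos θ, 0; 0, 0, 1]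

/-- Complexified rotation matrix. -/
def RotC (θ : ℝ) : Matrix (Fin 3) (Fin 3) ℂ := (Rot θ).map (fun a => (a : ℂ))

/-- The polarization tensor N(n). -/
def Nmat (n : C3) : Matrix (Fin 3) (Fin 3) ℂ :=
  !![(n 0 + Complex.I * n 1)/2, (n 0 - Complex.I * n 1)/2, 0;
     (n 1 - Complex.I * n 0)/2, (n 1 + Complex.I * n 0)/2, 0;
     0, 0, n 2]

/-- Bessel function of integer order, via the Bessel integral
`J_ν(A) = (1/2π) ∫₀^{2π} e^{i(νφ − A sin φ)} dφ`. -/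
def besselJ (ν : ℤ) (A : ℝ) : ℂ :=
  (1/(2*Real.pi)) * ∫ φ in (0:ℝ)..(2*Real.pi),
    Complex.exp (Complex.I * (((ν : ℝ) * φ - A * Real.sin φ : ℝ) : ℂ))

/-- The Bessel vector `(J_{α+1}(γr), J_{α−1}(γr), J_α(γr))`. -/
def Jvec (α : ℤ) (γ r : ℝ) : C3 :=
  ![besselJ (α+1) (γ*r), besselJ (α-1) (γ*r), besselJ α (γ*r)]

/-- Twisted wave with parameters `(α, β, γ)` and polarization vector `n`,
expressed in cylindrical coordinates:
`E₀ = e^{i(αφ+βz)} R_φ N(n) (J_{α+1}(γr), J_{α−1}(γr), J_α(γr))ᵀ`. -/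
def twistedCyl (α : ℤ) (β γ : ℝ) (n : C3) (r φ z : ℝ) : C3 :=
  Complex.exp (Complex.I * (((α : ℝ) * φ + β * z : ℝ) : ℂ)) •
    (RotC φ).mulVec ((Nmat n).mulVec (Jvec α γ r))

/-! ### Auxiliary lemmas -/

/-- The Bessel integrand. -/
def eI (ν : ℤ) (A ψ : ℝ) : ℂ :=
  Complex.exp (Complex.I * (((ν : ℝ) * ψ - A * Real.sin ψ : ℝ) : ℂ))

lemma contE (ν : ℤ) (A : ℝ) : Continuous (eI ν A) := by
  unfold eI; fun_prop

lemma intE (ν : ℤ) (A : ℝ) :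
    IntervalIntegrable (eI ν A) volume 0 (2*π) :=
  (contE ν A).intervalIntegrable _ _

lemma besselJ_eq (ν : ℤ) (A : ℝ) :
    (∫ ψ in (0:ℝ)..(2*π), eI ν A ψ) = ((2*π : ℝ) : ℂ) * besselJ ν A := by
  have hπ : (π : ℂ) ≠ 0 := by exact_mod_cast Real.pi_ne_zero
  rw [besselJ, ← mul_assoc,
    show ((2*π : ℝ) : ℂ) * (1/(2*(π:ℝ))) = 1 by push_cast; field_simp, one_mul]
  simp only [eI]

lemma rotC_mulVec (ψ : ℝ) (v : Fin 3 → ℂ) :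
    (RotC ψ).mulVec v = ![((Real.cos ψ : ℝ) : ℂ) * v 0 - ((Real.sin ψ : ℝ) : ℂ) * v 1,
      ((Real.sin ψ : ℝ) : ℂ) * v 0 + ((Real.cos ψ : ℝ) : ℂ) * v 1, v 2] := by
  funext j; fin_cases j <;>
    simp [RotC, Rot, Matrix.mulVec, dotProduct, Fin.sum_univ_three] <;> ring

lemma rot_mulVec (ψ : ℝ) (v : Fin 3 → ℝ) :
    (Rot ψ).mulVec v = ![Real.cos ψ * v 0 - Real.sin ψ * v 1,
      Real.sin ψ * v 0 + Real.cos ψ * v 1, v 2] := by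
  funext j; fin_cases j <;>
    simp [Rot, Matrix.mulVec, dotProduct, Fin.sum_univ_three] <;> ring

lemma rotC_add (a b : ℝ) : RotC (a + b) = RotC a * RotC b := by
  ext i j
  fin_cases i <;> fin_cases j <;>
    simp [RotC, Rot, Matrix.mul_apply, Fin.sum_univ_three, Real.cos_add, Real.sin_add] <;> ring

lemma exp_arg_add (α : ℤ) (A ψ : ℝ) :
    eI (α+1) A ψ = eI α A ψ * (((Real.cos ψ : ℝ) : ℂ) + ((Real.sin ψ : ℝ) : ℂ) * Complex.I) := by
  unfold eI
  rw [show Complex.I * ((((α+1 : ℤ) : ℝ) * ψ - A * Real.sin ψ : ℝ) : ℂ)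
      = Complex.I * (((α : ℝ) * ψ - A * Real.sin ψ : ℝ) : ℂ) + (ψ : ℂ) * Complex.I by
    push_cast; ring]
  rw [Complex.exp_add, Complex.exp_mul_I, ← Complex.ofReal_cos, ← Complex.ofReal_sin]

lemma exp_arg_sub (α : ℤ) (A ψ : ℝ) :
    eI (α-1) A ψ = eI α A ψ * (((Real.cos ψ : ℝ) : ℂ) - ((Real.sin ψ : ℝ) : ℂ) * Complex.I) := by
  unfold eI
  rw [show Complex.I * ((((α-1 : ℤ) : ℝ) * ψ - A * Real.sin ψ : ℝ) : ℂ)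
      = Complex.I * (((α : ℝ) * ψ - A * Real.sin ψ : ℝ) : ℂ) + ((-ψ : ℝ) : ℂ) * Complex.I by
    push_cast; ring]
  rw [Complex.exp_add, Complex.exp_mul_I, ← Complex.ofReal_cos, ← Complex.ofReal_sin,
    Real.cos_neg, Real.sin_neg]
  push_cast; ring

lemma ptwise (α : ℤ) (A ψ : ℝ) (a b : ℂ) :
    eI α A ψ * (((Real.cos ψ : ℝ) : ℂ) * a + ((Real.sin ψ : ℝ) : ℂ) * b)
    = (a - Complex.I * b)/2 * eI (α+1) A ψ + (a + Complex.I * b)/2 * eI (α-1) A ψ := by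
  rw [exp_arg_add, exp_arg_sub]
  linear_combination (eI α A ψ * ((Real.sin ψ : ℝ) : ℂ) * b) * Complex.I_sq

lemma key0 (α : ℤ) (A : ℝ) (n : C3) :
    (∫ ψ in (0:ℝ)..(2*π), eI α A ψ * (RotC ψ).mulVec n 0)
    = ((2*π : ℝ) : ℂ) *
        (Nmat n).mulVec ![besselJ (α+1) A, besselJ (α-1) A, besselJ α A] 0 := by
  have h : (fun ψ : ℝ => eI α A ψ * (RotC ψ).mulVec n 0)
      = fun ψ => (n 0 - Complex.I * (-(n 1)))/2 * eI (α+1) A ψ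
          + (n 0 + Complex.I * (-(n 1)))/2 * eI (α-1) A ψ := by
    funext ψ
    rw [← ptwise α A ψ (n 0) (-(n 1)), rotC_mulVec]
    simp only [Matrix.cons_val_zero, Matrix.cons_val_one, Matrix.head_cons]
    ring
  rw [h, intervalIntegral.integral_add ((intE (α+1) A).const_mul _) ((intE (α-1) A).const_mul _),
    intervalIntegral.integral_const_mul, intervalIntegral.integral_const_mul,
    besselJ_eq, besselJ_eq]
  simp [Nmat, Matrix.mulVec, dotProduct, Fin.sum_univ_three]
  ring

lemma key1 (α : ℤ) (A : ℝ) (n : C3) :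
    (∫ ψ in (0:ℝ)..(2*π), eI α A ψ * (RotC ψ).mulVec n 1)
    = ((2*π : ℝ) : ℂ) *
        (Nmat n).mulVec ![besselJ (α+1) A, besselJ (α-1) A, besselJ α A] 1 := by
  have h : (fun ψ : ℝ => eI α A ψ * (RotC ψ).mulVec n 1)
      = fun ψ => (n 1 - Complex.I * n 0)/2 * eI (α+1) A ψ
          + (n 1 + Complex.I * n 0)/2 * eI (α-1) A ψ := by
    funext ψ
    rw [← ptwise α A ψ (n 1) (n 0), rotC_mulVec]
    simp only [Matrix.cons_val_zero, Matrix.cons_val_one, Matrix.head_cons]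
    ring
  rw [h, intervalIntegral.integral_add ((intE (α+1) A).const_mul _) ((intE (α-1) A).const_mul _),
    intervalIntegral.integral_const_mul, intervalIntegral.integral_const_mul,
    besselJ_eq, besselJ_eq]
  simp [Nmat, Matrix.mulVec, dotProduct, Fin.sum_univ_three]
  ring

lemma key2 (α : ℤ) (A : ℝ) (n : C3) :
    (∫ ψ in (0:ℝ)..(2*π), eI α A ψ * (RotC ψ).mulVec n 2)
    = ((2*π : ℝ) : ℂ) *
        (Nmat n).mulVec ![besselJ (α+1) A, besselJ (α-1) A, besselJ α A] 2 := by
  have h : (fun ψ : ℝ => eI α A ψ * (RotC ψ).mulVec n 2)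
      = fun ψ => n 2 * eI α A ψ := by
    funext ψ
    rw [rotC_mulVec]
    simp only [Matrix.cons_val_two, Matrix.tail_cons, Matrix.head_cons]
    ring
  rw [h, intervalIntegral.integral_const_mul, besselJ_eq]
  simp [Nmat, Matrix.mulVec, dotProduct, Fin.sum_univ_three]
  ring

lemma key (α : ℤ) (A : ℝ) (n : C3) (j : Fin 3) :
    (∫ ψ in (0:ℝ)..(2*π), eI α A ψ * (RotC ψ).mulVec n j)
    = ((2*π : ℝ) : ℂ) *
        (Nmat n).mulVec ![besselJ (α+1) A, besselJ (α-1) A, besselJ α A] j := by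
  fin_cases j
  · exact key0 α A n
  · exact key1 α A n
  · exact key2 α A n

lemma contRot (n : C3) (j : Fin 3) : Continuous fun ψ : ℝ => (RotC ψ).mulVec n j := by
  simp only [rotC_mulVec]
  fin_cases j <;> simp <;> fun_prop

lemma keyM (α : ℤ) (A : ℝ) (n : C3) (M : Matrix (Fin 3) (Fin 3) ℂ) (i : Fin 3) :
    (∫ ψ in (0:ℝ)..(2*π), eI α A ψ * M.mulVec ((RotC ψ).mulVec n) i)
    = ((2*π : ℝ) : ℂ) *
        M.mulVec ((Nmat n).mulVec ![besselJ (α+1) A, besselJ (α-1) A, besselJ α A]) i := by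
  have hg : ∀ j : Fin 3, IntervalIntegrable (fun ψ : ℝ => eI α A ψ * (RotC ψ).mulVec n j)
      volume 0 (2*π) := by
    intro j
    exact ((contE α A).mul (contRot n j)).intervalIntegrable _ _
  have h : (fun ψ : ℝ => eI α A ψ * M.mulVec ((RotC ψ).mulVec n) i)
      = fun ψ => M i 0 * (eI α A ψ * (RotC ψ).mulVec n 0)
          + M i 1 * (eI α A ψ * (RotC ψ).mulVec n 1)
          + M i 2 * (eI α A ψ * (RotC ψ).mulVec n 2) := by
    funext ψ
    simp [Matrix.mulVec, dotProduct, Fin.sum_univ_three]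
    ring
  rw [h, intervalIntegral.integral_add (((hg 0).const_mul _).add ((hg 1).const_mul _))
      ((hg 2).const_mul _),
    intervalIntegral.integral_add ((hg 0).const_mul _) ((hg 1).const_mul _),
    intervalIntegral.integral_const_mul, intervalIntegral.integral_const_mul,
    intervalIntegral.integral_const_mul, key, key, key]
  simp [Matrix.mulVec, dotProduct, Fin.sum_univ_three]
  ring

/-- **Fourier representation of twisted waves.** A twisted wave is a
phase-modulated superposition of plane waves whose wavevectors run over the
circle `{R_Φ k₀ : Φ ∈ [0,2π]}`, `k₀ = (0,γ,β)`, with polarization vectors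
rotating along: `E₀(x) = (1/2π) ∫₀^{2π} e^{iαΦ} (R_Φ n) e^{i(R_Φ k₀)·x} dΦ`. -/
theorem twistedWave_fourier_representation
    (α : ℤ) (β γ : ℝ) (hγ : 0 < γ) (n : C3)
    (E : V3 → C3)
    (hE : ∀ r φ z : ℝ, 0 < r →
      E ![r * Real.cos φ, r * Real.sin φ, z] = twistedCyl α β γ n r φ z) :
    ∀ x : V3, 0 < x 0 ^ 2 + x 1 ^ 2 → ∀ i : Fin 3,
      E x i = ((1/(2*Real.pi) : ℝ) : ℂ) *
        ∫ Φ in (0:ℝ)..(2*Real.pi),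
          Complex.exp (Complex.I * (((α : ℝ) * Φ : ℝ) : ℂ)) *
            (RotC Φ).mulVec n i *
            Complex.exp (Complex.I *
              ((∑ j, (Rot Φ).mulVec (![0, γ, β] : V3) j * x j : ℝ) : ℂ)) := by
  intro x hx i
  set z := x 2 with hz
  have h0 : ¬(x 0 = 0 ∧ x 1 = 0) := by
    rintro ⟨h1, h2⟩; rw [h1, h2] at hx; norm_num at hx
  have hc : (x 0 + x 1 * Complex.I : ℂ) ≠ 0 := by
    intro h
    exact h0 ⟨by simpa using congrArg Complex.re h, by simpa using congrArg Complex.im h⟩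
  set r := ‖(x 0 + x 1 * Complex.I : ℂ)‖ with hrdef
  set φ := Complex.arg (x 0 + x 1 * Complex.I) with hφdef
  have hr : 0 < r := norm_pos_iff.mpr hc
  have hre : (x 0 + x 1 * Complex.I : ℂ).re = x 0 := by simp
  have him : (x 0 + x 1 * Complex.I : ℂ).im = x 1 := by simp
  have hcos : r * Real.cos φ = x 0 := by
    rw [hφdef, Complex.cos_arg hc, hre, hrdef]
    field_simp
  have hsin : r * Real.sin φ = x 1 := by
    rw [hφdef, Complex.sin_arg, him, hrdef]
    field_simp
  have hxeq : x = ![r * Real.cos φ, r * Real.sin φ, z] := by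
    funext j; fin_cases j <;> simp [hcos, hsin, hz]
  rw [hxeq, hE r φ z hr]
  have hsum : ∀ Φ : ℝ,
      (∑ j, (Rot Φ).mulVec (![0, γ, β] : V3) j * (![r * Real.cos φ, r * Real.sin φ, z] : V3) j)
        = γ * r * Real.sin (φ - Φ) + β * z := by
    intro Φ
    rw [rot_mulVec, Fin.sum_univ_three]
    simp only [Matrix.cons_val_zero, Matrix.cons_val_one, Matrix.head_cons,
      Matrix.cons_val_two, Matrix.tail_cons]
    rw [Real.sin_sub]; ring
  simp only [hsum]
  set f : ℝ → ℂ := fun Φ =>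
    Complex.exp (Complex.I * (((α : ℝ) * Φ : ℝ) : ℂ)) * (RotC Φ).mulVec n i *
      Complex.exp (Complex.I * ((γ * r * Real.sin (φ - Φ) + β * z : ℝ) : ℂ)) with hf
  have hper : Function.Periodic f (2*π) := by
    intro Φ
    simp only [hf]
    have h1 : RotC (Φ + 2*π) = RotC Φ := by
      ext a b
      fin_cases a <;> fin_cases b <;>
        simp [RotC, Rot, Real.cos_add_two_pi, Real.sin_add_two_pi]
    rw [h1, show φ - (Φ + 2*π) = (φ - Φ) - 2*π by ring, Real.sin_sub_two_pi,
      show Complex.I * (((α : ℝ) * (Φ + 2*π) : ℝ) : ℂ)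
        = Complex.I * (((α : ℝ) * Φ : ℝ) : ℂ) + (α : ℂ) * (2*(π:ℂ)*Complex.I) by
        push_cast; ring,
      Complex.exp_add, Complex.exp_int_mul_two_pi_mul_I]
    ring
  have h2 : (∫ Φ in (0:ℝ)..(2*π), f Φ) = ∫ ψ in (0:ℝ)..(2*π), f (φ + ψ) := by
    rw [intervalIntegral.integral_comp_add_left f φ, add_zero]
    simpa using hper.intervalIntegral_add_eq 0 φ
  rw [h2]
  have hpt : ∀ ψ : ℝ, f (φ + ψ)
      = Complex.exp (Complex.I * (((α : ℝ) * φ + β * z : ℝ) : ℂ)) *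
        (eI α (γ*r) ψ * (RotC φ).mulVec ((RotC ψ).mulVec n) i) := by
    intro ψ
    simp only [hf, eI]
    rw [rotC_add, ← Matrix.mulVec_mulVec,
      show φ - (φ + ψ) = -ψ by ring, Real.sin_neg,
      mul_right_comm, ← Complex.exp_add,
      show Complex.I * (((α : ℝ) * (φ + ψ) : ℝ) : ℂ)
          + Complex.I * ((γ * r * -Real.sin ψ + β * z : ℝ) : ℂ)
        = Complex.I * (((α : ℝ) * φ + β * z : ℝ) : ℂ)
          + Complex.I * (((α : ℝ) * ψ - γ * r * Real.sin ψ : ℝ) : ℂ) by push_cast; ring,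
      Complex.exp_add]
    ring
  simp only [hpt]
  rw [intervalIntegral.integral_const_mul, keyM α (γ*r) n (RotC φ) i]
  rw [twistedCyl, Jvec]
  simp only [Pi.smul_apply, smul_eq_mul]
  have hπ : (π : ℂ) ≠ 0 := by exact_mod_cast Real.pi_ne_zero
  push_cast
  field_simp
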